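/- Let V = ⟨V_a⟩ be a Lusin π-base for a topological space (X,τ) and let f : (X,τ) → (Y,σ) be an open continuous surjection. Then f⟨V⟩ is an α-scheme for (Y,σ). -/

import Mathlib

open Set Topology

universe u v

/-- The restriction `p↾n` of `p : ℕ → ℕ`, as a finite sequence in `ω^{<ω}`. -/
def pre (p : ℕ → ℕ) (n : ℕ) : List ℕ := List.ofFn fun i : Fin n => p i

/-- `a ⊑ p` : the finite sequence `a` is an initial segment of the branch `p`. -/
def IsPre (a : List ℕ) (p : ℕ → ℕ) : Prop := a = pre p a.length

/-- `S_a = {p ∈ ω^ω : a ⊑ p}`, the pieces of the standard Lusin scheme. -/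
def stdS (a : List ℕ) : Set (ℕ → ℕ) := {p | IsPre a p}

section scheme

variable {X Y : Type*}

/-- `fruit_p(V) = ⋂_n V_{p↾n}`. -/
def fruit (V : List ℕ → Set X) (p : ℕ → ℕ) : Set X := ⋂ n, V (pre p n)

/-- `flesh(V) = ⋃_a V_a`. -/
def flesh (V : List ℕ → Set X) : Set X := ⋃ a, V a

/-- The Souslin scheme `V` covers the set `A`. -/
def Covers (V : List ℕ → Set X) (A : Set X) : Prop :=
  V [] = A ∧ ∀ a, V a = ⋃ n, V (a ++ [n])

/-- The Souslin scheme `V` partitions the set `A`. -/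
def Partitions (V : List ℕ → Set X) (A : Set X) : Prop :=
  Covers V A ∧ ∀ a, ∀ n m : ℕ, n ≠ m → V (a ++ [n]) ∩ V (a ++ [m]) = ∅

/-- `V` is complete: every fruit is nonempty. -/
def CompleteScheme (V : List ℕ → Set X) : Prop := ∀ q : ℕ → ℕ, (fruit V q).Nonempty

/-- `V` has strict branches: every fruit is a singleton. -/
def StrictBranches (V : List ℕ → Set X) : Prop := ∀ q : ℕ → ℕ, ∃ x, fruit V q = {x}

/-- `V` is regular: `V_{a⌢n} ⊆ V_a`. -/
def RegularScheme (V : List ℕ → Set X) : Prop := ∀ a n, V (a ++ [n]) ⊆ V a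

/-- `V` has nonempty leaves. -/
def NonemptyLeaves (V : List ℕ → Set X) : Prop := ∀ a, (V a).Nonempty

/-- `V` is an open Souslin scheme with respect to the topology `t`. -/
def OpenScheme (t : TopologicalSpace X) (V : List ℕ → Set X) : Prop := ∀ a, t.IsOpen (V a)

/-- `V` is semi-open with respect to the topology `t`: `V_a ⊆ Cl_t(Int_t(V_a))`. -/
def SemiOpenScheme (t : TopologicalSpace X) (V : List ℕ → Set X) : Prop :=
  ∀ a, V a ⊆ @closure _ t (@interior _ t (V a))

/-- `Ṽ^k_b = ⋃_{j ≥ k} V_{b⌢j}`. -/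
def shootSet (V : List ℕ → Set X) (b : List ℕ) (k : ℕ) : Set X :=
  ⋃ j, ⋃ (_ : k ≤ j), V (b ++ [j])

/-- `shoot_b(V) = {Ṽ^k_b : k ∈ ω}`. -/
def shoot (V : List ℕ → Set X) (b : List ℕ) : Set (Set X) := {G | ∃ k, G = shootSet V b k}

/-- `γ → U`: some member of the family `γ` is contained in `U`. -/
def Engulfs (γ : Set (Set X)) (U : Set X) : Prop := ∃ G ∈ γ, G ⊆ U

/-- `p →_V U`: there is an infinite `L ⊆ ω` with `shoot_{p↾n}(V) → U` for all `n ∈ L`. -/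
def ArrowSeq (V : List ℕ → Set X) (p : ℕ → ℕ) (U : Set X) : Prop :=
  ∃ L : Set ℕ, L.Infinite ∧ ∀ n ∈ L, Engulfs (shoot V (pre p n)) U

/-- `p →_{V,t} x`: `p →_V U` for every `t`-open `U` containing `x`. -/
def ArrowPt (t : TopologicalSpace X) (V : List ℕ → Set X) (p : ℕ → ℕ) (x : X) : Prop :=
  ∀ U : Set X, t.IsOpen U → x ∈ U → ArrowSeq V p U

/-- `V` is a Lusin π-base for `(X, t)`. -/
def LusinPiBase (t : TopologicalSpace X) (V : List ℕ → Set X) : Prop :=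
  OpenScheme t V ∧ Partitions V Set.univ ∧ StrictBranches V ∧
    ∀ x : X, ∀ U : Set X, t.IsOpen U → x ∈ U →
      ∃ a : List ℕ, ∃ n : ℕ, x ∈ V a ∧ shootSet V a n ⊆ U

/-- `V` is an α-scheme for `(X, t)`. -/
def AlphaScheme (t : TopologicalSpace X) (V : List ℕ → Set X) : Prop :=
  OpenScheme t V ∧ CompleteScheme V ∧ Covers V Set.univ ∧
    (∀ a : List ℕ, ∀ x ∈ V a, ∃ p : ℕ → ℕ, IsPre a p ∧ x ∈ fruit V p ∧ ArrowPt t V p x) ∧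
    (∀ p : ℕ → ℕ, ∃ x ∈ fruit V p, ArrowPt t V p x)

/-- `V` is a ramose α-scheme for `(X, t)`. -/
def RamoseAlphaScheme (t : TopologicalSpace X) (V : List ℕ → Set X) : Prop :=
  AlphaScheme t V ∧ ∀ a : List ℕ, ∀ x ∈ V a,
    Cardinal.mk {p : ℕ → ℕ // IsPre a p ∧ x ∈ fruit V p ∧ ArrowPt t V p x} = Cardinal.continuum

/-- `γ` is a π-base for `(X, t)`. -/
def PiBase (t : TopologicalSpace X) (γ : Set (Set X)) : Prop :=
  (∀ G ∈ γ, G.Nonempty ∧ t.IsOpen G) ∧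
    ∀ U : Set X, t.IsOpen U → U.Nonempty → ∃ G ∈ γ, G ⊆ U

/-- `γ` is a π-net for the subspace `A` of `(X, t)`. -/
def PiNetFor (t : TopologicalSpace X) (γ : Set (Set X)) (A : Set X) : Prop :=
  (∀ G ∈ γ, G.Nonempty) ∧
    ∀ U : Set X, t.IsOpen U → (U ∩ A).Nonempty → ∃ G ∈ γ, G ⊆ U ∩ A

/-- `V` is a π-base Souslin scheme on `(X, t)`:
an open scheme such that `{V_b : a ⊑ b}` is a π-net for the subspace `V_a`, for each `a`. -/
def PiBaseScheme (t : TopologicalSpace X) (V : List ℕ → Set X) : Prop :=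
  OpenScheme t V ∧ ∀ a, PiNetFor t {S | ∃ b, a <+: b ∧ S = V b} (V a)

/-- `(X, t)` is a π-space. -/
def PiSpace (t : TopologicalSpace X) : Prop :=
  ∃ V : List ℕ → Set X, OpenScheme t V ∧ Partitions V Set.univ ∧ StrictBranches V ∧
    PiBase t {S | ∃ a, S = V a}

/-- `(X, t)` is zero-dimensional: it has a base consisting of clopen sets. -/
def ZeroDimT (t : TopologicalSpace X) : Prop :=
  ∀ U : Set X, t.IsOpen U → ∀ x ∈ U, ∃ C : Set X, t.IsOpen C ∧ @IsClosed _ t C ∧ x ∈ C ∧ C ⊆ U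

/-- `branches_V(x) = {q ∈ ω^ω : x ∈ fruit_q(V)}`. -/
def branches (V : List ℕ → Set X) (x : X) : Set (ℕ → ℕ) := {q | x ∈ fruit V q}

/-- `f` is a selector on `V`: a surjection of `ω^ω` onto `flesh(V)` such that each fiber
`f⁻¹(x)` is a dense subset of the subspace `branches_V(x)` of the Baire space. -/
def IsSelector (V : List ℕ → Set X) (f : (ℕ → ℕ) → X) : Prop :=
  (∀ p, f p ∈ flesh V) ∧ (∀ x ∈ flesh V, ∃ p, f p = x) ∧
    ∀ x ∈ flesh V, f ⁻¹' {x} ⊆ branches V x ∧ branches V x ⊆ closure (f ⁻¹' {x})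

/-- The topology `σ_{t,f}` on `ω^ω` generated by the subbase
`{f⁻¹[U] : U ∈ t} ∪ {S_a : a ∈ ω^{<ω}}`. -/
def sigmaTop (t : TopologicalSpace X) (f : (ℕ → ℕ) → X) : TopologicalSpace (ℕ → ℕ) :=
  TopologicalSpace.generateFrom
    ({S | ∃ U : Set X, t.IsOpen U ∧ S = f ⁻¹' U} ∪ {S | ∃ a : List ℕ, S = stdS a})

end scheme

/-- `(ω^ω, t)` is a standard π-space: the family `τ_N \ {∅}` of nonempty open sets of the
Baire space is a π-base for `(ω^ω, t)`. -/
def StandardPiSpace (t : TopologicalSpace (ℕ → ℕ)) : Prop :=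
  (∀ U : Set (ℕ → ℕ), IsOpen U → U.Nonempty → t.IsOpen U) ∧
    ∀ U : Set (ℕ → ℕ), t.IsOpen U → U.Nonempty → ∃ G : Set (ℕ → ℕ), IsOpen G ∧ G.Nonempty ∧ G ⊆ U

section helpers

variable {X : Type*}

lemma pre_zero (p : ℕ → ℕ) : pre p 0 = [] := rfl

lemma pre_succ (p : ℕ → ℕ) (n : ℕ) : pre p (n + 1) = pre p n ++ [p n] := by
  rw [pre, List.ofFn_succ', List.concat_eq_append]
  simp [pre]

lemma pre_length (p : ℕ → ℕ) (n : ℕ) : (pre p n).length = n := by simp [pre]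

lemma reg_of_covers {V : List ℕ → Set X} {A : Set X} (hcov : Covers V A)
    (a : List ℕ) (n : ℕ) : V (a ++ [n]) ⊆ V a := by
  intro x hx
  rw [hcov.2 a]
  exact Set.mem_iUnion.2 ⟨n, hx⟩

lemma append_mono_of_covers {V : List ℕ → Set X} {A : Set X} (hcov : Covers V A) :
    ∀ (t a : List ℕ), V (a ++ t) ⊆ V a := by
  intro t
  induction t using List.reverseRecOn with
  | nil => intro a; simp
  | append_singleton t j ih =>
    intro a
    have h1 : V ((a ++ t) ++ [j]) ⊆ V (a ++ t) := reg_of_covers hcov _ _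
    have := (h1.trans (ih a))
    simpa [List.append_assoc] using this

lemma prefix_mono_of_covers {V : List ℕ → Set X} {A : Set X} (hcov : Covers V A)
    {a b : List ℕ} (h : a <+: b) : V b ⊆ V a := by
  obtain ⟨t, rfl⟩ := h
  exact append_mono_of_covers hcov t a

lemma pre_mono_of_covers {V : List ℕ → Set X} {A : Set X} (hcov : Covers V A)
    (p : ℕ → ℕ) {n m : ℕ} (h : n ≤ m) : V (pre p m) ⊆ V (pre p n) := by
  induction m, h using Nat.le_induction with
  | base => exact fun x hx => hx
  | succ m hm ih =>
    refine (fun x hx => ih ?_)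
    rw [pre_succ] at hx
    exact reg_of_covers hcov _ _ hx

lemma nonempty_of_strict {V : List ℕ → Set X} (hsb : StrictBranches V)
    (a : List ℕ) : (V a).Nonempty := by
  set q : ℕ → ℕ := fun i => a.getD i 0 with hq
  obtain ⟨x, hx⟩ := hsb q
  have hpre : pre q a.length = a := by
    apply List.ext_getElem
    · simp [pre_length]
    · intro i h1 h2
      simp [pre, List.getElem_ofFn, hq, List.getD_eq_getElem]
  have hxmem : x ∈ fruit V q := by rw [hx]; rfl
  have := Set.mem_iInter.1 hxmem a.length
  rw [hpre] at this
  exact ⟨x, this⟩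

lemma eq_pre_of_mem {V : List ℕ → Set X} (hpart : Partitions V Set.univ)
    (p : ℕ → ℕ) (x : X) :
    ∀ (n : ℕ) (a : List ℕ), a.length = n → x ∈ V a → x ∈ V (pre p n) → a = pre p n := by
  intro n
  induction n with
  | zero => intro a ha _ _; rw [List.length_eq_zero_iff] at ha; rw [ha]; rfl
  | succ n ih =>
    intro a ha hxa hxp
    have hne : a ≠ [] := by intro h; rw [h] at ha; simp at ha
    have hsplit := List.dropLast_append_getLast hne
    have hlen : a.dropLast.length = n := by
      have := List.length_dropLast (xs := a); omega
    have hxa' : x ∈ V a.dropLast := by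
      have : V a ⊆ V a.dropLast := by
        conv_lhs => rw [← hsplit]
        exact reg_of_covers hpart.1 _ _
      exact this hxa
    have hxp' : x ∈ V (pre p n) := by
      have : V (pre p (n+1)) ⊆ V (pre p n) := by
        rw [pre_succ]; exact reg_of_covers hpart.1 _ _
      exact this hxp
    have hdl : a.dropLast = pre p n := ih a.dropLast hlen hxa' hxp'
    rw [pre_succ]
    rw [← hsplit, hdl]
    congr 1
    by_contra hne'
    have hj : a.getLast hne ≠ p n := by simpa using hne'
    have hdisj := hpart.2 (pre p n) (a.getLast hne) (p n) hj
    have hx1 : x ∈ V (pre p n ++ [a.getLast hne]) := by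
      rw [← hdl, hsplit]; exact hxa
    have hx2 : x ∈ V (pre p n ++ [p n]) := by
      rw [← pre_succ]; exact hxp
    have : x ∈ (∅ : Set X) := hdisj ▸ ⟨hx1, hx2⟩
    exact this.elim

lemma shootSet_zero {V : List ℕ → Set X} {A : Set X} (hcov : Covers V A)
    (b : List ℕ) : shootSet V b 0 = V b := by
  rw [hcov.2 b]
  simp [shootSet]

lemma key_arrow [tX : TopologicalSpace X] {V : List ℕ → Set X}
    (hV : LusinPiBase tX V) {p : ℕ → ℕ} {x : X}
    (hx : ∀ n, x ∈ V (pre p n)) : ArrowPt tX V p x := by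
  obtain ⟨hopen, hpart, hsb, hL6⟩ := hV
  intro U hU hxU
  by_cases hA : ∃ n, V (pre p n) ⊆ U
  · obtain ⟨n, hn⟩ := hA
    refine ⟨Set.Ici n, ?_, ?_⟩
    · intro hfin
      exact absurd (hfin.bddAbove) (by
        rintro ⟨b, hb⟩
        have : n + b + 1 ≤ b := hb (Set.mem_Ici.2 (by omega))
        omega)
    · intro m hm
      refine ⟨shootSet V (pre p m) 0, ⟨0, rfl⟩, ?_⟩
      rw [shootSet_zero hpart.1]
      exact (pre_mono_of_covers hpart.1 p hm).trans hn
  · push_neg at hA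
    have claim : ∀ N, ∃ n, N ≤ n ∧ Engulfs (shoot V (pre p n)) U := by
      intro N
      have hOpen : tX.IsOpen (U ∩ V (pre p N)) := tX.isOpen_inter _ _ hU (hopen _)
      obtain ⟨a, m, hxa, hsub⟩ := hL6 x (U ∩ V (pre p N)) hOpen ⟨hxU, hx N⟩
      have haeq : a = pre p a.length :=
        eq_pre_of_mem hpart p x a.length a rfl hxa (hx a.length)
      by_cases hlen : N ≤ a.length
      · exact ⟨a.length, hlen, ⟨shootSet V a m, ⟨m, by conv_lhs => rw [haeq]⟩,
          hsub.trans (Set.inter_subset_left)⟩⟩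
      · exfalso
        push_neg at hlen
        obtain ⟨z, hz⟩ := nonempty_of_strict hsb (a ++ [m])
        have hzs : z ∈ shootSet V a m := Set.mem_iUnion.2 ⟨m, Set.mem_iUnion.2 ⟨le_refl m, hz⟩⟩
        have hzN : z ∈ V (pre p N) := (hsub hzs).2
        have hzN' : z ∈ V (pre p (a.length + 1)) :=
          pre_mono_of_covers hpart.1 p hlen hzN
        have heq : a ++ [m] = pre p (a.length + 1) :=
          eq_pre_of_mem hpart p z (a.length + 1) (a ++ [m]) (by simp) hz hzN'
        have : V (pre p (a.length + 1)) ⊆ U := by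
          rw [← heq]
          refine (fun w hw => (hsub ?_).1)
          exact Set.mem_iUnion.2 ⟨m, Set.mem_iUnion.2 ⟨le_refl m, hw⟩⟩
        exact hA _ this
    set L := {n | Engulfs (shoot V (pre p n)) U} with hL
    refine ⟨L, ?_, fun n hn => hn⟩
    apply Set.infinite_of_not_bddAbove
    rintro ⟨b, hb⟩
    obtain ⟨n, hn1, hn2⟩ := claim (b + 1)
    have : n ≤ b := hb hn2
    omega

lemma extend_branch {V : List ℕ → Set X} {A : Set X} (hcov : Covers V A)
    {a : List ℕ} {x : X} (hx : x ∈ V a) :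
    ∃ p : ℕ → ℕ, IsPre a p ∧ ∀ n, x ∈ V (pre p n) := by
  classical
  have hch : ∀ b, x ∈ V b → ∃ j, x ∈ V (b ++ [j]) := by
    intro b hb
    rw [hcov.2 b] at hb
    exact Set.mem_iUnion.1 hb
  set c : List ℕ → ℕ := fun b => if h : x ∈ V b then (hch b h).choose else 0 with hc
  have hcspec : ∀ b, x ∈ V b → x ∈ V (b ++ [c b]) := by
    intro b hb
    simp only [hc, dif_pos hb]
    exact (hch b hb).choose_spec
  set ext : ℕ → List ℕ := fun k => Nat.rec a (fun _ ih => ih ++ [c ih]) k with hext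
  have hext0 : ext 0 = a := rfl
  have hextS : ∀ k, ext (k + 1) = ext k ++ [c (ext k)] := fun k => rfl
  have hlen : ∀ k, (ext k).length = a.length + k := by
    intro k; induction k with
    | zero => rfl
    | succ k ih => rw [hextS, List.length_append, ih]; simp; omega
  have hxk : ∀ k, x ∈ V (ext k) := by
    intro k; induction k with
    | zero => exact hx
    | succ k ih => rw [hextS]; exact hcspec _ ih
  have hchain : ∀ k l, k ≤ l → ext k <+: ext l := by
    intro k l h
    induction l, h using Nat.le_induction with
    | base => exact List.prefix_refl _
    | succ l hl ih => exact ih.trans ⟨[c (ext l)], (hextS l).symm⟩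
  set p : ℕ → ℕ := fun n => (ext (n + 1)).getD n 0 with hp
  have hgetD : ∀ k n, n < (ext k).length → (ext k).getD n 0 = p n := by
    intro k n hn
    have e1 := hlen (n + 1)
    have hn1 : n < (ext (n + 1)).length := by omega
    show (ext k).getD n 0 = (ext (n + 1)).getD n 0
    rcases le_total k (n + 1) with h | h
    · obtain ⟨t, ht⟩ := hchain k (n + 1) h
      rw [← ht, List.getD_append _ _ _ _ hn]
    · obtain ⟨t, ht⟩ := hchain (n + 1) k h
      rw [← ht, List.getD_append _ _ _ _ hn1]
  have hpren : ∀ n, pre p n = (ext n).take n := by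
    intro n
    apply List.ext_getElem
    · simp [pre_length, hlen]
    · intro i h1 h2
      rw [pre_length] at h1
      have e1 := hlen n
      have hi : i < (ext n).length := by omega
      rw [List.getElem_take]
      simp only [pre, List.getElem_ofFn]
      rw [← hgetD n i hi, List.getD_eq_getElem _ _ hi]
  refine ⟨p, ?_, ?_⟩
  · show a = pre p a.length
    rw [hpren a.length]
    have hpref : a <+: ext a.length := hext0 ▸ hchain 0 a.length (Nat.zero_le _)
    exact List.prefix_iff_eq_take.1 hpref
  · intro n
    have hpref : pre p n <+: ext n := by rw [hpren]; exact List.take_prefix _ _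
    exact prefix_mono_of_covers hcov hpref (hxk n)

lemma image_shootSet {Y : Type*} (f : X → Y) (V : List ℕ → Set X) (b : List ℕ) (k : ℕ) :
    f '' shootSet V b k = shootSet (fun a => f '' V a) b k := by
  simp [shootSet, Set.image_iUnion]

lemma arrowPt_transfer {Y : Type*} [tX : TopologicalSpace X] [tY : TopologicalSpace Y]
    {V : List ℕ → Set X} {f : X → Y} (hc : Continuous f)
    {p : ℕ → ℕ} {x : X} (h : ArrowPt tX V p x) :
    ArrowPt tY (fun a => f '' V a) p (f x) := by
  intro U hU hxU
  have hU' : IsOpen U := hU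
  obtain ⟨L, hLinf, hL⟩ := h (f ⁻¹' U) (hU'.preimage hc) hxU
  refine ⟨L, hLinf, fun n hn => ?_⟩
  obtain ⟨G, ⟨k, rfl⟩, hG⟩ := hL n hn
  refine ⟨shootSet (fun a => f '' V a) (pre p n) k, ⟨k, rfl⟩, ?_⟩
  rw [← image_shootSet]
  exact Set.image_subset_iff.2 hG

end helpers

/-- If `V` is a Lusin π-base for `(X,τ)` and `f : (X,τ) → (Y,σ)` is an open continuous
surjection, then `f⟨V⟩` is an α-scheme for `(Y,σ)`. -/
theorem statement10 {X Y : Type*} [tX : TopologicalSpace X] [tY : TopologicalSpace Y]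
    (V : List ℕ → Set X) (hV : LusinPiBase tX V) (f : X → Y)
    (hc : Continuous f) (ho : IsOpenMap f) (hs : Function.Surjective f) :
    AlphaScheme tY (fun a => f '' V a) := by
  refine ⟨?_, ?_, ?_, ?_, ?_⟩
  · intro a
    exact ho _ (hV.1 a)
  · intro q
    obtain ⟨x, hx⟩ := hV.2.2.1 q
    have hxm : x ∈ fruit V q := by rw [hx]; rfl
    exact ⟨f x, Set.mem_iInter.2 fun n => ⟨x, Set.mem_iInter.1 hxm n, rfl⟩⟩
  · constructor
    · simp only [hV.2.1.1.1, Set.image_univ]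
      exact hs.range_eq
    · intro a
      show f '' V a = ⋃ n, f '' V (a ++ [n])
      rw [hV.2.1.1.2 a, Set.image_iUnion]
  · intro a y hy
    obtain ⟨x, hx, rfl⟩ := hy
    obtain ⟨p, hp1, hp2⟩ := extend_branch hV.2.1.1 hx
    exact ⟨p, hp1, Set.mem_iInter.2 fun n => ⟨x, hp2 n, rfl⟩,
      arrowPt_transfer hc (key_arrow hV hp2)⟩
  · intro p
    obtain ⟨x, hx⟩ := hV.2.2.1 p
    have hxm' : x ∈ fruit V p := by rw [hx]; rfl
    have hxm : ∀ n, x ∈ V (pre p n) := fun n => Set.mem_iInter.1 hxm' n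
    exact ⟨f x, Set.mem_iInter.2 fun n => ⟨x, hxm n, rfl⟩,
      arrowPt_transfer hc (key_arrow hV hxm)⟩
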